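/- Take game constants p₁ = 1, q₁ = 1, p₂ = 0, q₂ = 1 (so D = 1, B_Q = {(X,Y) ∈ ℕ² : X ≤ Y} and T_Q = {(0,0)}). Then the set of P-positions of the corresponding Rational Wythoff Nim equals {(⌊φn⌋, ⌊φn⌋ + ⌊φ²n⌋) : n ∈ ℕ} ∪ {(⌊φ²n⌋, ⌊φn⌋ + ⌊φ²n⌋) : n ∈ ℕ}, where φ := (1+√5)/2. -/

import Mathlib

open scoped symmDiff


/-- Membership in the set of allowed positions `B_Q`. -/
def inBQ (p1 q1 p2 q2 : ℕ) (pos : ℕ × ℕ) : Prop :=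
  pos.1 * q1 ≤ pos.2 * p1 ∧ pos.2 * p2 ≤ pos.1 * q2

/-- Membership in the set `T_Q` (the inequalities are read in ℤ). -/
def inTQ (p1 q1 p2 q2 : ℕ) (pos : ℕ × ℕ) : Prop :=
  inBQ p1 q1 p2 q2 pos ∧
    (p1 : ℤ) * ((pos.2 : ℤ) - (q2 : ℤ)) < (q1 : ℤ) * ((pos.1 : ℤ) - (p2 : ℤ)) ∧
    (p2 : ℤ) * ((pos.2 : ℤ) - (q1 : ℤ)) > (q2 : ℤ) * ((pos.1 : ℤ) - (p1 : ℤ))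

/-- A legal move of the Q-subtraction game `G_Q(M)`. -/
def QMove (p1 q1 p2 q2 : ℕ) (M : Set (ℕ × ℕ)) (pos pos' : ℕ × ℕ) : Prop :=
  ∃ s t : ℕ, (s, t) ∈ M ∧
    p1 * s + p2 * t ≤ pos.1 ∧ q1 * s + q2 * t ≤ pos.2 ∧
    pos'.1 = pos.1 - (p1 * s + p2 * t) ∧ pos'.2 = pos.2 - (q1 * s + q2 * t) ∧
    inBQ p1 q1 p2 q2 pos'

/-- `pos` is a P-position of the game with move relation `move`: every legal move
leads to a non-P-position.  (Every legal move of the games considered here strictly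
decreases the coordinate sum, which makes the recursion well-founded.) -/
def PPos (move : ℕ × ℕ → ℕ × ℕ → Prop) : ℕ × ℕ → Prop
  | pos => ∀ pos', move pos pos' → pos'.1 + pos'.2 < pos.1 + pos.2 → ¬ PPos move pos'
termination_by pos => pos.1 + pos.2

/-- The move set of Rational Wythoff Nim. -/
def MRW : Set (ℕ × ℕ) := {m | ∃ t : ℕ, 1 ≤ t ∧ (m = (0, t) ∨ m = (t, 0) ∨ m = (t, t))}

/-- The golden ratio `φ = (1+√5)/2`. -/
noncomputable def phi : ℝ := (1 + Real.sqrt 5) / 2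

/-! ### Auxiliary development -/

lemma phi_eq_gold : phi = Real.goldenRatio := rfl

lemma one_lt_phi : 1 < phi := Real.one_lt_goldenRatio

lemma phi_pos : 0 < phi := Real.goldenRatio_pos

lemma phi_sq : phi ^ 2 = phi + 1 := Real.goldenRatio_sq

lemma phi_irrational : Irrational phi := Real.goldenRatio_irrational

lemma phi_conj : phi.HolderConjugate (phi ^ 2) := by
  rw [Real.holderConjugate_iff]
  constructor
  · exact one_lt_phi
  · have h2 : phi ≠ 0 := ne_of_gt phi_pos
    have := phi_sq
    field_simp
    nlinarith [phi_sq]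

noncomputable def wA (n : ℕ) : ℕ := ⌊phi * n⌋₊

noncomputable def wB (n : ℕ) : ℕ := wA n + n

lemma wA_zero : wA 0 = 0 := by simp [wA]

lemma phiMulNonneg (n : ℕ) : (0:ℝ) ≤ phi * n := mul_nonneg phi_pos.le (Nat.cast_nonneg n)

lemma le_wA (n : ℕ) : n ≤ wA n := by
  apply Nat.le_floor
  have : (1 : ℝ) * n ≤ phi * n :=
    mul_le_mul_of_nonneg_right one_lt_phi.le (Nat.cast_nonneg n)
  simpa using this

lemma wA_strictMono : StrictMono wA := by
  apply strictMono_nat_of_lt_succ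
  intro n
  have h0 : (0:ℝ) ≤ phi * n := phiMulNonneg n
  have h1 : (wA n : ℝ) ≤ phi * n := Nat.floor_le h0
  have h2 : phi * n + 1 ≤ phi * (n + 1) := by nlinarith [one_lt_phi]
  have : (wA n + 1 : ℕ) ≤ ⌊phi * (n+1)⌋₊ := by
    apply Nat.le_floor
    push_cast
    nlinarith
  simpa [wA] using this

lemma wA_inj {n m : ℕ} (h : wA n = wA m) : n = m := wA_strictMono.injective h

lemma wA_floor (n : ℕ) : ⌊phi * (n : ℝ)⌋₊ = wA n := rfl

lemma wB_floor (n : ℕ) : ⌊phi ^ 2 * n⌋₊ = wB n := by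
  have h : phi ^ 2 * n = phi * n + (n : ℝ) := by rw [phi_sq]; ring
  rw [wB, wA, h, Nat.floor_add_natCast (phiMulNonneg n)]

lemma wA_cast (n : ℕ) : (wA n : ℤ) = beattySeq phi n := by
  rw [beattySeq, wA, mul_comm phi, Int.natCast_floor_eq_floor
    (mul_nonneg (Nat.cast_nonneg n) phi_pos.le)]
  norm_cast

lemma wB_cast (n : ℕ) : (wB n : ℤ) = beattySeq (phi ^ 2) n := by
  have h2 : (0:ℝ) ≤ phi ^ 2 := sq_nonneg phi
  rw [beattySeq, ← wB_floor, mul_comm (phi ^ 2), Int.natCast_floor_eq_floor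
    (mul_nonneg (Nat.cast_nonneg n) h2)]
  norm_cast

lemma rayleigh :
    {x : ℤ | ∃ k > 0, beattySeq phi k = x} ∆ {x : ℤ | ∃ k > 0, beattySeq (phi ^ 2) k = x}
      = {n : ℤ | 0 < n} :=
  phi_irrational.beattySeq_symmDiff_beattySeq_pos phi_conj

lemma wA_ne_wB {n m : ℕ} (hn : 1 ≤ n) (hm : 1 ≤ m) : wA n ≠ wB m := by
  intro h
  have hmem : ((wA n : ℤ)) ∈ {n : ℤ | 0 < n} := by
    have := le_wA n
    simp only [Set.mem_setOf_eq]
    omega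
  rw [← rayleigh, Set.mem_symmDiff] at hmem
  have h1 : (wA n : ℤ) ∈ {x | ∃ k > 0, beattySeq phi k = x} :=
    ⟨(n : ℤ), by exact_mod_cast hn, (wA_cast n).symm⟩
  have h2 : (wA n : ℤ) ∈ {x | ∃ k > 0, beattySeq (phi ^ 2) k = x} :=
    ⟨(m : ℤ), by exact_mod_cast hm, by rw [← wB_cast, h]⟩
  rcases hmem with ⟨-, h⟩ | ⟨-, h⟩ <;> [exact h h2; exact h h1]

lemma exists_wA_or_wB {a : ℕ} (ha : 1 ≤ a) :
    (∃ n, 1 ≤ n ∧ a = wA n) ∨ (∃ n, 1 ≤ n ∧ a = wB n) := by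
  have hmem : ((a : ℤ)) ∈ {n : ℤ | 0 < n} := by simp only [Set.mem_setOf_eq]; omega
  rw [← rayleigh, Set.mem_symmDiff] at hmem
  rcases hmem with ⟨⟨k, hk, hak⟩, -⟩ | ⟨⟨k, hk, hak⟩, -⟩
  · left
    refine ⟨k.toNat, by omega, ?_⟩
    have : (wA k.toNat : ℤ) = (a : ℤ) := by
      rw [wA_cast]; rw [← hak]; congr 1; omega
    omega
  · right
    refine ⟨k.toNat, by omega, ?_⟩
    have : (wB k.toNat : ℤ) = (a : ℤ) := by
      rw [wB_cast]; rw [← hak]; congr 1; omega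
    omega

/-- The P-positions of Wythoff Nim in `(a, b) = (X, Y - X)` coordinates. -/
def wP (a b : ℕ) : Prop := ∃ n, (a = wA n ∧ b = wB n) ∨ (a = wB n ∧ b = wA n)

lemma wP_symm {a b : ℕ} (h : wP a b) : wP b a := by
  obtain ⟨n, h | h⟩ := h
  · exact ⟨n, Or.inr ⟨h.2, h.1⟩⟩
  · exact ⟨n, Or.inl ⟨h.2, h.1⟩⟩

lemma wP_zero : wP 0 0 := ⟨0, Or.inl ⟨wA_zero.symm, by simp [wB, wA_zero]⟩⟩

lemma wAB_inj {n m : ℕ} (h : wA n + n = wA m + m) : n = m := by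
  rcases lt_trichotomy n m with hl | he | hl
  · have := wA_strictMono hl; omega
  · exact he
  · have := wA_strictMono hl; omega

lemma wA_ne' {n m : ℕ} (hn : 1 ≤ n) (hm : 1 ≤ m) : wA n ≠ wA m + m := by
  have := wA_ne_wB hn hm
  simpa [wB] using this

/-- No Wythoff move connects two P-positions. -/
lemma no_move {a b a' b' u : ℕ} (hu : 1 ≤ u)
    (h : (a' = a ∧ b' + u = b) ∨ (a' + u = a ∧ b' = b) ∨ (a' + u = a ∧ b' + u = b))
    (hw : wP a b) (hw' : wP a' b') : False := by
  obtain ⟨n, hn⟩ := hw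
  obtain ⟨m, hm⟩ := hw'
  simp only [wB] at hn hm
  have hAn := le_wA n
  have hAm := le_wA m
  have h0 := wA_zero
  rcases h with ⟨h1, h2⟩ | ⟨h1, h2⟩ | ⟨h1, h2⟩ <;>
    rcases hn with ⟨ha, hb⟩ | ⟨ha, hb⟩ <;> rcases hm with ⟨ha', hb'⟩ | ⟨ha', hb'⟩
  -- type (i): a' = a, b' + u = b
  · have : m = n := wA_inj (by omega); subst this; omega
  · rcases Nat.eq_zero_or_pos n with rfl | hn1
    · omega
    rcases Nat.eq_zero_or_pos m with rfl | hm1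
    · omega
    first
      | exact wA_ne' hn1 hm1 (by omega)
      | exact wA_ne' hm1 hn1 (by omega)
  · omega
  · have : m = n := wAB_inj (by omega); subst this; omega
  -- type (ii): a' + u = a, b' = b
  · have : m = n := wAB_inj (by omega); subst this; omega
  · omega
  · rcases Nat.eq_zero_or_pos n with rfl | hn1
    · omega
    rcases Nat.eq_zero_or_pos m with rfl | hm1
    · omega
    first
      | exact wA_ne' hn1 hm1 (by omega)
      | exact wA_ne' hm1 hn1 (by omega)
  · have : m = n := wA_inj (by omega); subst this; omega
  -- type (iii): a' + u = a, b' + u = b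
  · have : m = n := by omega
    subst this; omega
  · have hnm : n = 0 ∧ m = 0 := by omega
    obtain ⟨rfl, rfl⟩ := hnm; omega
  · have hnm : n = 0 ∧ m = 0 := by omega
    obtain ⟨rfl, rfl⟩ := hnm; omega
  · have : m = n := by omega
    subst this; omega

/-- From a non-P-position (with `a ≤ b`) there is a Wythoff move to a P-position. -/
lemma exists_move_le {a b : ℕ} (hab : a ≤ b) (h : ¬ wP a b) :
    ∃ a' b' u, 1 ≤ u ∧ wP a' b' ∧
      ((a' = a ∧ b' + u = b) ∨ (a' + u = a ∧ b' = b) ∨ (a' + u = a ∧ b' + u = b)) := by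
  rcases Nat.eq_zero_or_pos a with rfl | ha
  · have hb : 1 ≤ b := by
      rcases Nat.eq_zero_or_pos b with rfl | hb
      · exact absurd wP_zero h
      · exact hb
    exact ⟨0, 0, b, hb, wP_zero, Or.inl ⟨rfl, by omega⟩⟩
  rcases exists_wA_or_wB ha with ⟨n, hn, rfl⟩ | ⟨n, hn, rfl⟩
  · -- a = wA n
    rcases lt_trichotomy (b - wA n) n with hdn | hdn | hdn
    · -- diagonal move to (wA d, wB d) where d = b - wA n < n
      have hAd : wA (b - wA n) ≤ wA n := wA_strictMono.monotone (by omega)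
      have hne : wA (b - wA n) ≠ wA n := by
        intro he
        have : b - wA n = n := wA_inj he
        omega
      refine ⟨wA (b - wA n), wB (b - wA n), wA n - wA (b - wA n), by omega,
        ⟨b - wA n, Or.inl ⟨rfl, rfl⟩⟩, Or.inr (Or.inr ⟨by omega, ?_⟩)⟩
      simp only [wB]; omega
    · exact absurd ⟨n, Or.inl ⟨rfl, by simp only [wB]; omega⟩⟩ h
    · -- reduce b to wB n
      exact ⟨wA n, wB n, b - wB n, by simp only [wB] at *; omega,
        ⟨n, Or.inl ⟨rfl, rfl⟩⟩, Or.inl ⟨rfl, by simp only [wB] at *; omega⟩⟩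
  · -- a = wB n : reduce b to wA n
    have hAn : wA n < wB n := by simp only [wB]; omega
    exact ⟨wB n, wA n, b - wA n, by omega, ⟨n, Or.inr ⟨rfl, rfl⟩⟩, Or.inl ⟨rfl, by omega⟩⟩

lemma exists_move {a b : ℕ} (h : ¬ wP a b) :
    ∃ a' b' u, 1 ≤ u ∧ wP a' b' ∧
      ((a' = a ∧ b' + u = b) ∨ (a' + u = a ∧ b' = b) ∨ (a' + u = a ∧ b' + u = b)) := by
  rcases le_total a b with hab | hab
  · exact exists_move_le hab h
  · obtain ⟨a', b', u, hu, hw, hc⟩ := exists_move_le hab (fun hw => h (wP_symm hw))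
    exact ⟨b', a', u, hu, wP_symm hw, by omega⟩

/-- Characterization of the moves of this instance of the game. -/
lemma qmove_iff (X Y X' Y' : ℕ) :
    QMove 1 1 0 1 MRW (X, Y) (X', Y') ↔
      X' ≤ Y' ∧ ∃ u : ℕ, 1 ≤ u ∧
        ((X' = X ∧ Y' + u = Y) ∨ (X' + u = X ∧ Y' + u = Y) ∨
          (X' + u = X ∧ Y' + 2 * u = Y)) := by
  constructor
  · rintro ⟨s, t, hst, h1, h2, h3, h4, h5, h6⟩
    obtain ⟨u, hu, hc⟩ := hst
    simp only [inBQ] at h5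
    simp only [Prod.mk.injEq] at hc
    rcases hc with ⟨hs, ht⟩ | ⟨hs, ht⟩ | ⟨hs, ht⟩
    · exact ⟨by omega, u, hu, by omega⟩
    · exact ⟨by omega, u, hu, by omega⟩
    · exact ⟨by omega, u, hu, by omega⟩
  · rintro ⟨hle, u, hu, hc⟩
    rcases hc with ⟨h1, h2⟩ | ⟨h1, h2⟩ | ⟨h1, h2⟩
    · exact ⟨0, u, ⟨u, hu, Or.inl rfl⟩, by constructor <;> [skip; constructor] <;>
        first
          | (simp only [inBQ]; omega)
          | omega⟩
    · exact ⟨u, 0, ⟨u, hu, Or.inr (Or.inl rfl)⟩, by constructor <;> [skip; constructor] <;>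
        first
          | (simp only [inBQ]; omega)
          | omega⟩
    · exact ⟨u, u, ⟨u, hu, Or.inr (Or.inr rfl)⟩, by constructor <;> [skip; constructor] <;>
        first
          | (simp only [inBQ]; omega)
          | omega⟩

lemma PPos_iff (move : ℕ × ℕ → ℕ × ℕ → Prop) (pos : ℕ × ℕ) :
    PPos move pos ↔
      ∀ pos', move pos pos' → pos'.1 + pos'.2 < pos.1 + pos.2 → ¬ PPos move pos' := by
  rw [PPos]

/-- Main lemma: on the board, P-positions are exactly the Wythoff pairs. -/
lemma main_lemma (N : ℕ) : ∀ X Y : ℕ, X + Y ≤ N → X ≤ Y →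
    (PPos (QMove 1 1 0 1 MRW) (X, Y) ↔ wP X (Y - X)) := by
  induction N using Nat.strong_induction_on with
  | _ N ih =>
  intro X Y hN hXY
  constructor
  · intro hp
    by_contra hnp
    obtain ⟨a', b', u, hu, hw, hc⟩ := exists_move hnp
    have hmove : QMove 1 1 0 1 MRW (X, Y) (a', a' + b') := by
      rw [qmove_iff]
      exact ⟨by omega, u, hu, by omega⟩
    have hlt : a' + (a' + b') < X + Y := by omega
    have hp' : PPos (QMove 1 1 0 1 MRW) (a', a' + b') := by
      rw [ih (a' + (a' + b')) (by omega) a' (a' + b') le_rfl (by omega)]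
      have hb : a' + b' - a' = b' := by omega
      rw [hb]
      exact hw
    exact (PPos_iff _ _).1 hp (a', a' + b') hmove hlt hp'
  · intro hw
    rw [PPos_iff]
    rintro ⟨X', Y'⟩ hmove hlt hp'
    rw [qmove_iff] at hmove
    obtain ⟨hle', u, hu, hc⟩ := hmove
    simp only at hlt
    have hw' : wP X' (Y' - X') :=
      (ih (X' + Y') (by omega) X' Y' le_rfl hle').1 hp'
    exact no_move hu (by omega) hw hw'

theorem stmt_15 :
    {pos : ℕ × ℕ | inBQ 1 1 0 1 pos ∧ PPos (QMove 1 1 0 1 MRW) pos} =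
      {pos : ℕ × ℕ | ∃ n : ℕ, pos = (⌊phi * n⌋₊, ⌊phi * n⌋₊ + ⌊phi ^ 2 * n⌋₊)} ∪
      {pos : ℕ × ℕ | ∃ n : ℕ, pos = (⌊phi ^ 2 * n⌋₊, ⌊phi * n⌋₊ + ⌊phi ^ 2 * n⌋₊)} := by
  ext ⟨X, Y⟩
  simp only [Set.mem_setOf_eq, Set.mem_union, Prod.mk.injEq, wB_floor, wA_floor]
  constructor
  · rintro ⟨hb, hp⟩
    have hle : X ≤ Y := by simpa [inBQ] using hb.1
    have hw := (main_lemma (X + Y) X Y le_rfl hle).1 hp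
    obtain ⟨n, ⟨h1, h2⟩ | ⟨h1, h2⟩⟩ := hw
    · left; exact ⟨n, h1, by show Y = wA n + wB n; omega⟩
    · right; exact ⟨n, h1, by show Y = wA n + wB n; simp only [wB] at *; omega⟩
  · rintro (⟨n, rfl, rfl⟩ | ⟨n, rfl, rfl⟩)
    · have hle : wA n ≤ wA n + wB n := by omega
      refine ⟨by simp [inBQ], ?_⟩
      rw [main_lemma (wA n + (wA n + wB n)) _ _ le_rfl hle]
      exact ⟨n, Or.inl ⟨rfl, by omega⟩⟩
    · have hle : wB n ≤ wA n + wB n := by simp only [wB]; omega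
      refine ⟨by simp [inBQ, wB], ?_⟩
      rw [main_lemma (wB n + (wA n + wB n)) _ _ le_rfl hle]
      exact ⟨n, Or.inr ⟨rfl, by simp only [wB]; omega⟩⟩
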